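/- If φ: ℝ → ℝ is twice differentiable and satisfies the ODE (φ'' + φ')² + εφ' = 0 with ε ∈ {1,-1}, then u(t,x) = φ(x + εt) satisfies the PDE u_t + (u_x + u_xx)² = 0. Moreover, for any real constants c1, c2, the function φ(ξ) = c1 - εξ + 4δc2·e^{-ξ/2} + εc2²·e^{-ξ} with δ ∈ {1,-1} satisfies this ODE. -/

import Mathlib

private lemma shift_deriv (f : ℝ → ℝ) (hf : Differentiable ℝ f) (c x : ℝ) :
    deriv (fun y => f (y + c)) x = deriv f (x + c) := by
  have h : HasDerivAt (fun y : ℝ => f (y + c)) (deriv f (x + c) * 1) x :=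
    (hf (x + c)).hasDerivAt.comp x ((hasDerivAt_id x).add_const c)
  simpa using h.deriv

private lemma affine_deriv (f : ℝ → ℝ) (hf : Differentiable ℝ f) (a b t : ℝ) :
    deriv (fun s => f (a + b * s)) t = deriv f (a + b * t) * b := by
  have haff : HasDerivAt (fun s : ℝ => a + b * s) b t := by
    simpa using ((hasDerivAt_id t).const_mul b).const_add a
  have h : HasDerivAt (fun s : ℝ => f (a + b * s)) (deriv f (a + b * t) * b) t :=
    (hf (a + b * t)).hasDerivAt.comp t haff
  exact h.deriv

private lemma phi_hasDeriv (ε δ c1 c2 : ℝ) (s : ℝ) :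
    HasDerivAt (fun s : ℝ => c1 - ε * s + 4 * δ * c2 * Real.exp (-s / 2)
        + ε * c2 ^ 2 * Real.exp (-s))
      (-ε + (-2 * δ * c2) * Real.exp (-s / 2) + (-(ε * c2 ^ 2)) * Real.exp (-s)) s := by
  have h1 : HasDerivAt (fun s : ℝ => c1 - ε * s) (-ε) s := by
    simpa using ((hasDerivAt_id s).const_mul ε).const_sub c1
  have h2 : HasDerivAt (fun s : ℝ => Real.exp (-s / 2)) (Real.exp (-s / 2) * (-1 / 2)) s := by
    have : HasDerivAt (fun s : ℝ => -s / 2) (-1 / 2) s := by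
      simpa using ((hasDerivAt_id s).neg.div_const 2)
    exact (Real.hasDerivAt_exp (-s / 2)).comp s this
  have h3 : HasDerivAt (fun s : ℝ => Real.exp (-s)) (Real.exp (-s) * (-1)) s := by
    exact (Real.hasDerivAt_exp (-s)).comp s (hasDerivAt_neg s)
  have := (h1.add ((h2.const_mul (4 * δ * c2)))).add (h3.const_mul (ε * c2 ^ 2))
  refine this.congr_deriv ?_
  ring

private lemma phi_deriv_eq (ε δ c1 c2 : ℝ) :
    deriv (fun s : ℝ => c1 - ε * s + 4 * δ * c2 * Real.exp (-s / 2)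
        + ε * c2 ^ 2 * Real.exp (-s))
      = fun s => -ε + (-2 * δ * c2) * Real.exp (-s / 2) + (-(ε * c2 ^ 2)) * Real.exp (-s) := by
  funext s
  exact (phi_hasDeriv ε δ c1 c2 s).deriv

private lemma phi_deriv2_eq (ε δ c1 c2 : ℝ) (s : ℝ) :
    deriv (deriv (fun s : ℝ => c1 - ε * s + 4 * δ * c2 * Real.exp (-s / 2)
        + ε * c2 ^ 2 * Real.exp (-s))) s
      = δ * c2 * Real.exp (-s / 2) + ε * c2 ^ 2 * Real.exp (-s) := by
  rw [phi_deriv_eq]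
  have h2 : HasDerivAt (fun s : ℝ => Real.exp (-s / 2)) (Real.exp (-s / 2) * (-1 / 2)) s := by
    have : HasDerivAt (fun s : ℝ => -s / 2) (-1 / 2) s := by
      simpa using ((hasDerivAt_id s).neg.div_const 2)
    exact (Real.hasDerivAt_exp (-s / 2)).comp s this
  have h3 : HasDerivAt (fun s : ℝ => Real.exp (-s)) (Real.exp (-s) * (-1)) s := by
    exact (Real.hasDerivAt_exp (-s)).comp s (hasDerivAt_neg s)
  have h : HasDerivAt (fun s : ℝ => -ε + (-2 * δ * c2) * Real.exp (-s / 2)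
      + (-(ε * c2 ^ 2)) * Real.exp (-s))
      (δ * c2 * Real.exp (-s / 2) + ε * c2 ^ 2 * Real.exp (-s)) s := by
    have := ((hasDerivAt_const s (-ε)).add (h2.const_mul (-2 * δ * c2))).add
      (h3.const_mul (-(ε * c2 ^ 2)))
    refine this.congr_deriv ?_
    ring
  exact h.deriv

theorem stmt18 (ε δ : ℝ) (hε : ε = 1 ∨ ε = -1) (hδ : δ = 1 ∨ δ = -1) :
    (∀ φ : ℝ → ℝ, Differentiable ℝ φ → Differentiable ℝ (deriv φ) →
      (∀ ξ : ℝ, (deriv (deriv φ) ξ + deriv φ ξ) ^ 2 + ε * deriv φ ξ = 0) →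
      ∀ t x : ℝ,
        deriv (fun s => φ (x + ε * s)) t
          + (deriv (fun y => φ (y + ε * t)) x
             + deriv (fun y => deriv (fun z => φ (z + ε * t)) y) x) ^ 2 = 0) ∧
    (∀ c1 c2 : ℝ, ∀ ξ : ℝ,
      (deriv (deriv (fun s : ℝ => c1 - ε * s + 4 * δ * c2 * Real.exp (-s / 2)
          + ε * c2 ^ 2 * Real.exp (-s))) ξ
        + deriv (fun s : ℝ => c1 - ε * s + 4 * δ * c2 * Real.exp (-s / 2)
          + ε * c2 ^ 2 * Real.exp (-s)) ξ) ^ 2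
      + ε * deriv (fun s : ℝ => c1 - ε * s + 4 * δ * c2 * Real.exp (-s / 2)
          + ε * c2 ^ 2 * Real.exp (-s)) ξ = 0) := by
  have hε2 : ε ^ 2 = 1 := by rcases hε with h | h <;> rw [h] <;> norm_num
  have hδ2 : δ ^ 2 = 1 := by rcases hδ with h | h <;> rw [h] <;> norm_num
  constructor
  · intro φ hφ hφ' hode t x
    have e1 : deriv (fun s => φ (x + ε * s)) t = deriv φ (x + ε * t) * ε :=
      affine_deriv φ hφ x ε t
    have e2 : deriv (fun y => φ (y + ε * t)) x = deriv φ (x + ε * t) :=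
      shift_deriv φ hφ (ε * t) x
    have e3 : deriv (fun y => deriv (fun z => φ (z + ε * t)) y) x
        = deriv (deriv φ) (x + ε * t) := by
      have : (fun y => deriv (fun z => φ (z + ε * t)) y)
          = fun y => deriv φ (y + ε * t) := by
        funext y; exact shift_deriv φ hφ (ε * t) y
      rw [this]
      exact shift_deriv (deriv φ) hφ' (ε * t) x
    rw [e1, e2, e3]
    have := hode (x + ε * t)
    nlinarith [this]
  · intro c1 c2 ξ
    rw [phi_deriv2_eq ε δ c1 c2 ξ, phi_deriv_eq ε δ c1 c2]
    have hexp : Real.exp (-ξ / 2) ^ 2 = Real.exp (-ξ) := by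
      rw [sq, ← Real.exp_add]; ring_nf
    simp only
    rw [← hexp]
    linear_combination (hδ2 - hε2) * c2 ^ 2 * Real.exp (-ξ / 2) ^ 2
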